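/- Let U be a unitary complex matrix written in block form U = [[A, B], [C, D]] where A is an n×n block and D is a d×d block (n and d need not be equal). Then |det(A)| = |det(D)|. -/

import Mathlib

open Matrix in
theorem stmt_3 (n d : ℕ)
    (A : Matrix (Fin n) (Fin n) ℂ) (B : Matrix (Fin n) (Fin d) ℂ)
    (C : Matrix (Fin d) (Fin n) ℂ) (D : Matrix (Fin d) (Fin d) ℂ)
    (hU : Matrix.fromBlocks A B C D * (Matrix.fromBlocks A B C D).conjTranspose = 1) :
    ‖A.det‖ = ‖D.det‖ := by
  have hU' : Matrix.fromBlocks (A * Aᴴ + B * Bᴴ) (A * Cᴴ + B * Dᴴ)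
      (C * Aᴴ + D * Bᴴ) (C * Cᴴ + D * Dᴴ) = Matrix.fromBlocks 1 0 0 1 := by
    rw [← Matrix.fromBlocks_multiply, ← Matrix.fromBlocks_conjTranspose, hU,
      Matrix.fromBlocks_one]
  obtain ⟨-, h12, -, h22⟩ := Matrix.ext_iff_blocks.mp hU'
  simp only [Matrix.toBlocks_fromBlocks₁₂, Matrix.toBlocks_fromBlocks₂₂] at h12 h22
  have hkey : Matrix.fromBlocks A B C D * Matrix.fromBlocks 1 Cᴴ 0 Dᴴ =
      Matrix.fromBlocks A 0 C 1 := by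
    rw [Matrix.fromBlocks_multiply]
    simp [h12, h22]
  have hdet : (Matrix.fromBlocks A B C D).det * (starRingEnd ℂ) D.det = A.det := by
    have := congrArg Matrix.det hkey
    simpa [Matrix.det_fromBlocks_zero₂₁, Matrix.det_fromBlocks_zero₁₂,
      Matrix.det_conjTranspose] using this
  have habsU : ‖(Matrix.fromBlocks A B C D).det‖ = 1 := by
    have := congrArg Matrix.det hU
    rw [Matrix.det_mul, Matrix.det_conjTranspose, Matrix.det_one] at this
    have h := congrArg norm this
    rw [show star (Matrix.fromBlocks A B C D).det
        = (starRingEnd ℂ) (Matrix.fromBlocks A B C D).det from rfl] at h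
    rw [norm_mul, Complex.norm_conj, norm_one] at h
    nlinarith [norm_nonneg (Matrix.fromBlocks A B C D).det]
  calc ‖A.det‖
      = ‖(Matrix.fromBlocks A B C D).det * (starRingEnd ℂ) D.det‖ := by
        rw [hdet]
    _ = ‖D.det‖ := by rw [norm_mul, habsU, Complex.norm_conj, one_mul]
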